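/- Bogoliubov/Atkinson recursion: let C be a filtered coalgebra with C₀ spanned by group-like elements, A a unital algebra, R : A → A a linear projection onto a subspace A₋ with complement A₊ = Ker(R). Let φ : C → A send group-likes to 1, and define ψ by the recursion ψ = e - R((ψ * (φ - e))) (well founded by the filtration). Then: (i) ψ(x) ∈ Im(R) for all x ∈ Ker(ε), and (ii) (ψ * φ)(x) ∈ Ker(R) for all x ∈ Ker(ε). -/
import Mathlib


open TensorProduct

section

variable {k : Type*} [Field k] {C : Type*} [AddCommGroup C] [Module k C] [Coalgebra k C]
variable {A : Type*} [CommRing A] [Algebra k A]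

/-- Convolution product on `Lin(C, A)`. -/
noncomputable def conv (α β : C →ₗ[k] A) : C →ₗ[k] A :=
  LinearMap.mul' k A ∘ₗ TensorProduct.map α β ∘ₗ Coalgebra.comul

/-- The convolution unit `e = u ∘ ε`. -/
noncomputable def convUnit : C →ₗ[k] A :=
  Algebra.linearMap k A ∘ₗ Coalgebra.counit

/-- Group-like elements: `Δ x = x ⊗ x` and `ε x = 1`. -/
def IsGroupLike (x : C) : Prop :=
  Coalgebra.comul x = x ⊗ₜ[k] x ∧ Coalgebra.counit x = (1 : k)

/-- Filtration condition `Δ(Cₙ) ⊆ ∑_{p+q=n} C_p ⊗ C_q`. -/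
def ComulFiltered (F : ℕ → Submodule k C) : Prop :=
  ∀ n : ℕ, F n ≤ Submodule.comap (Coalgebra.comul : C →ₗ[k] C ⊗[k] C)
    (⨆ p ∈ {p : ℕ × ℕ | p.1 + p.2 = n},
      LinearMap.range (TensorProduct.map (F p.1).subtype (F p.2).subtype))

/-- Convolution evaluated at a group-like element. -/
lemma conv_apply_groupLike (α β : C →ₗ[k] A) {x : C} (hx : IsGroupLike (k := k) x) :
    conv α β x = α x * β x := by
  simp [conv, hx.1]

lemma convUnit_apply_groupLike {x : C} (hx : IsGroupLike (k := k) x) :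
    (convUnit : C →ₗ[k] A) x = 1 := by
  simp [convUnit, hx.2]

/-- `conv α convUnit = α`. -/
lemma conv_convUnit (α : C →ₗ[k] A) : conv α (convUnit : C →ₗ[k] A) = α := by
  have hmap : TensorProduct.map α (convUnit : C →ₗ[k] A)
      = (TensorProduct.map α (Algebra.linearMap k A)) ∘ₗ
        LinearMap.lTensor C (Coalgebra.counit : C →ₗ[k] k) := by
    rw [LinearMap.map_comp_lTensor]; rfl
  ext x
  have h := Coalgebra.lTensor_counit_comul (R := k) x
  simp only [conv, LinearMap.comp_apply, hmap]
  rw [h]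
  simp

/-- `conv` distributes over subtraction in the second argument. -/
lemma conv_sub_right (α β γ : C →ₗ[k] A) :
    conv α (β - γ) = conv α β - conv α γ := by
  have : TensorProduct.map α (β - γ) = TensorProduct.map α β - TensorProduct.map α γ := by
    ext x y
    simp [TensorProduct.tmul_sub]
  simp only [conv, this]
  ext x
  simp

/-- Agreement of convolutions, from agreement in lower filtration degree. -/
lemma conv_congr_of_filtered (F : ℕ → Submodule k C) (hmono : Monotone F)
    (hfilt : ComulFiltered F) (α β γ : C →ₗ[k] A)
    (hγ : ∀ x ∈ F 0, γ x = 0) (m : ℕ) (hαβ : ∀ x ∈ F m, α x = β x) :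
    ∀ x ∈ F (m + 1), conv α γ x = conv β γ x := by
  intro x hx
  have hx' := hfilt (m + 1) hx
  rw [Submodule.mem_comap] at hx'
  have hker : (⨆ p ∈ {p : ℕ × ℕ | p.1 + p.2 = m + 1},
      LinearMap.range (TensorProduct.map (F p.1).subtype (F p.2).subtype)) ≤
      LinearMap.ker ((LinearMap.mul' k A ∘ₗ TensorProduct.map α γ)
        - (LinearMap.mul' k A ∘ₗ TensorProduct.map β γ)) := by
    refine iSup₂_le fun p hp => ?_
    have hp' : p.1 + p.2 = m + 1 := hp
    rw [LinearMap.range_le_ker_iff, LinearMap.sub_comp, LinearMap.comp_assoc,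
      LinearMap.comp_assoc, ← TensorProduct.map_comp, ← TensorProduct.map_comp]
    rcases Nat.eq_zero_or_pos p.2 with h2 | h2
    · have hz : γ ∘ₗ (F p.2).subtype = 0 := by
        ext y
        exact hγ y (h2 ▸ y.2)
      rw [hz]
      simp
    · have hp1 : p.1 ≤ m := by omega
      have he : α ∘ₗ (F p.1).subtype = β ∘ₗ (F p.1).subtype := by
        ext y
        exact hαβ y (hmono hp1 y.2)
      rw [he, sub_self]
  have hmem := hker hx'
  rw [LinearMap.mem_ker, LinearMap.sub_apply, sub_eq_zero] at hmem
  simpa [conv] using hmem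

variable (R : A →ₗ[k] A) (φ : C →ₗ[k] A)

/-- The Bogoliubov iteration sequence. -/
noncomputable def psiSeq : ℕ → (C →ₗ[k] A)
  | 0 => convUnit
  | n + 1 => convUnit - R ∘ₗ conv (psiSeq n) (φ - convUnit)

lemma psiSeq_zero : psiSeq R φ 0 = (convUnit : C →ₗ[k] A) := rfl

lemma psiSeq_succ_apply (n : ℕ) (x : C) :
    psiSeq R φ (n + 1) x = (convUnit : C →ₗ[k] A) x - R (conv (psiSeq R φ n) (φ - convUnit) x) := rfl

lemma phi_sub_convUnit_vanish (F : ℕ → Submodule k C)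
    (hF0 : F 0 = Submodule.span k {x : C | IsGroupLike (k := k) x})
    (hφ : ∀ x : C, IsGroupLike (k := k) x → φ x = 1) :
    ∀ x ∈ F 0, (φ - (convUnit : C →ₗ[k] A)) x = 0 := by
  intro x hx
  rw [hF0] at hx
  have : Submodule.span k {x : C | IsGroupLike (k := k) x} ≤
      LinearMap.ker (φ - convUnit) := by
    rw [Submodule.span_le]
    intro y hy
    rw [SetLike.mem_coe, LinearMap.mem_ker, LinearMap.sub_apply, hφ y hy,
      convUnit_apply_groupLike hy, sub_self]
  exact this hx

lemma psiSeq_stab (F : ℕ → Submodule k C) (hmono : Monotone F)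
    (hfilt : ComulFiltered F)
    (hF0 : F 0 = Submodule.span k {x : C | IsGroupLike (k := k) x})
    (hφ : ∀ x : C, IsGroupLike (k := k) x → φ x = 1) :
    ∀ n : ℕ, ∀ x ∈ F n, psiSeq R φ (n + 1) x = psiSeq R φ n x := by
  have hγ := phi_sub_convUnit_vanish φ F hF0 hφ
  intro n
  induction n with
  | zero =>
    intro x hx
    have hker : F 0 ≤ LinearMap.ker (R ∘ₗ conv (convUnit : C →ₗ[k] A) (φ - convUnit)) := by
      rw [hF0, Submodule.span_le]
      intro y hy
      rw [SetLike.mem_coe, LinearMap.mem_ker, LinearMap.comp_apply,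
        conv_apply_groupLike _ _ hy, convUnit_apply_groupLike hy,
        LinearMap.sub_apply, hφ y hy, convUnit_apply_groupLike hy]
      simp
    have h0 := hker hx
    rw [LinearMap.mem_ker, LinearMap.comp_apply] at h0
    rw [psiSeq_succ_apply, psiSeq_zero] at *
    rw [h0, sub_zero]
  | succ n ih =>
    intro x hx
    have hc := conv_congr_of_filtered F hmono hfilt (psiSeq R φ (n + 1)) (psiSeq R φ n)
      (φ - convUnit) hγ n ih x hx
    rw [psiSeq_succ_apply, psiSeq_succ_apply, hc]

lemma psiSeq_stab' (F : ℕ → Submodule k C) (hmono : Monotone F)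
    (hfilt : ComulFiltered F)
    (hF0 : F 0 = Submodule.span k {x : C | IsGroupLike (k := k) x})
    (hφ : ∀ x : C, IsGroupLike (k := k) x → φ x = 1) :
    ∀ n m : ℕ, n ≤ m → ∀ x ∈ F n, psiSeq R φ m x = psiSeq R φ n x := by
  intro n m hnm
  induction m, hnm using Nat.le_induction with
  | base => intro x _; rfl
  | succ m hm ih =>
    intro x hx
    rw [psiSeq_stab R φ F hmono hfilt hF0 hφ m x (hmono hm hx), ih x hx]

/-- Bogoliubov/Atkinson recursion: with `R : A → A` a linear projection, and
`φ` sending group-like elements to `1`, the map `ψ` defined by the recursion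
`ψ = e - R(ψ * (φ - e))` satisfies: (i) `ψ(x) ∈ Im R` for `x ∈ Ker ε`, and
(ii) `(ψ * φ)(x) ∈ Ker R` for `x ∈ Ker ε`. -/
theorem bogoliubov_atkinson (F : ℕ → Submodule k C) (hmono : Monotone F)
    (hexh : ⨆ n, F n = ⊤) (hfilt : ComulFiltered F)
    (hF0 : F 0 = Submodule.span k {x : C | IsGroupLike (k := k) x})
    (R : A →ₗ[k] A) (hidem : ∀ a : A, R (R a) = R a)
    (φ : C →ₗ[k] A) (hφ : ∀ x : C, IsGroupLike (k := k) x → φ x = 1) :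
    ∃ ψ : C →ₗ[k] A,
      ψ = convUnit - R ∘ₗ (conv ψ (φ - convUnit)) ∧
      (∀ x : C, Coalgebra.counit (R := k) x = 0 → ψ x ∈ LinearMap.range R) ∧
      (∀ x : C, Coalgebra.counit (R := k) x = 0 → (conv ψ φ) x ∈ LinearMap.ker R) := by
  classical
  have hγ := phi_sub_convUnit_vanish φ F hF0 hφ
  have stab := psiSeq_stab' R φ F hmono hfilt hF0 hφ
  have hex : ∀ x : C, ∃ n, x ∈ F n := by
    intro x
    have : x ∈ ⨆ n, F n := hexh ▸ Submodule.mem_top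
    exact (Submodule.mem_iSup_of_directed F hmono.directed_le).1 this
  set N : C → ℕ := fun x => (hex x).choose with hNdef
  have hN : ∀ x, x ∈ F (N x) := fun x => (hex x).choose_spec
  set f : C → A := fun x => psiSeq R φ (N x) x with hfdef
  have wd : ∀ x : C, ∀ n : ℕ, x ∈ F n → f x = psiSeq R φ n x := by
    intro x n hxn
    have h1 := stab (N x) (max n (N x)) le_sup_right x (hN x)
    have h2 := stab n (max n (N x)) le_sup_left x hxn
    simp only [hfdef]
    rw [← h1, h2]
  set ψ : C →ₗ[k] A :=
    { toFun := f
      map_add' := by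
        intro x y
        obtain ⟨a, ha⟩ := hex x
        obtain ⟨b, hb⟩ := hex y
        set c := max a b with hc
        have hxc : x ∈ F c := hmono le_sup_left ha
        have hyc : y ∈ F c := hmono le_sup_right hb
        rw [wd (x + y) c ((F c).add_mem hxc hyc), wd x c hxc, wd y c hyc, map_add]
      map_smul' := by
        intro r x
        obtain ⟨a, ha⟩ := hex x
        show f (r • x) = r • f x
        rw [wd (r • x) a ((F a).smul_mem r ha), wd x a ha, map_smul] } with hψdef
  have hψwd : ∀ x : C, ∀ n : ℕ, x ∈ F n → ψ x = psiSeq R φ n x := wd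
  have heq : ψ = convUnit - R ∘ₗ (conv ψ (φ - convUnit)) := by
    ext x
    obtain ⟨n, hxn⟩ := hex x
    have hxn1 : x ∈ F (n + 1) := hmono (Nat.le_succ n) hxn
    have hconv : conv ψ (φ - convUnit) x = conv (psiSeq R φ n) (φ - convUnit) x :=
      conv_congr_of_filtered F hmono hfilt ψ (psiSeq R φ n) (φ - convUnit) hγ n
        (fun y hy => hψwd y n hy) x hxn1
    rw [hψwd x (n + 1) hxn1]
    rw [psiSeq_succ_apply]
    simp only [LinearMap.sub_apply, LinearMap.comp_apply, hconv]
  refine ⟨ψ, heq, ?_, ?_⟩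
  · intro x hεx
    have : ψ x = (convUnit : C →ₗ[k] A) x - R (conv ψ (φ - convUnit) x) := by
      conv_lhs => rw [heq]
      rfl
    have hu : (convUnit : C →ₗ[k] A) x = 0 := by simp [convUnit, hεx]
    rw [hu, zero_sub] at this
    exact ⟨-(conv ψ (φ - convUnit) x), by rw [map_neg, ← this]⟩
  · intro x hεx
    have hsplit : conv ψ φ x = conv ψ (φ - convUnit) x + ψ x := by
      have : conv ψ (φ - convUnit) = conv ψ φ - ψ := by
        rw [conv_sub_right, conv_convUnit]
      rw [this, LinearMap.sub_apply, sub_add_cancel]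
    have hψx : ψ x = - R (conv ψ (φ - convUnit) x) := by
      have : ψ x = (convUnit : C →ₗ[k] A) x - R (conv ψ (φ - convUnit) x) := by
        conv_lhs => rw [heq]
        rfl
      have hu : (convUnit : C →ₗ[k] A) x = 0 := by simp [convUnit, hεx]
      rw [hu, zero_sub] at this
      exact this
    rw [LinearMap.mem_ker, hsplit, map_add, hψx, map_neg, hidem, add_neg_cancel]

end
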